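/- Let B be an n×n real expanding matrix and D ⊂ ℝⁿ a finite set with 0 ∈ D. Suppose that for some k ≥ 1 there exist tuples (d_0,…,d_{k−1}) ≠ (d'_0,…,d'_{k−1}) in D^k with Σ_{j=0}^{k−1} B^j d_j = Σ_{j=0}^{k−1} B^j d'_j (i.e. the expansions in D_k are not all distinct). Then D⁺(μ) = ∞. -/

import Mathlib

open MeasureTheory Filter
open scoped ENNReal

/-- The upper Beurling density of a positive Borel measure on ℝⁿ. -/
noncomputable def beurlingUpper {n : ℕ} (ν : Measure (EuclideanSpace ℝ (Fin n))) : ℝ≥0∞ :=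
  Filter.limsup (fun N : ℝ =>
    ⨆ z : EuclideanSpace ℝ (Fin n),
      ν {y | ∀ i, |y i - z i| ≤ N / 2} / ENNReal.ofReal (N ^ n)) Filter.atTop

/-- The measure `μ = sup_N μ_N` associated with the pair `(B, D)`. -/
noncomputable def selfAffineMeasure {n : ℕ} (B : Matrix (Fin n) (Fin n) ℝ)
    (D : Finset (EuclideanSpace ℝ (Fin n))) : Measure (EuclideanSpace ℝ (Fin n)) :=
  ⨆ N : ℕ, Measure.sum (fun f : Fin N → D =>
    Measure.dirac (∑ j : Fin N, Matrix.toEuclideanLin (B ^ (j : ℕ)) (f j)))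

lemma toEuclideanLin_mul_apply {n : ℕ} (M N : Matrix (Fin n) (Fin n) ℝ)
    (v : EuclideanSpace ℝ (Fin n)) :
    Matrix.toEuclideanLin (M * N) v = Matrix.toEuclideanLin M (Matrix.toEuclideanLin N v) := by
  simp [Matrix.toEuclideanLin_apply, Matrix.mulVec_mulVec]

/-- **Lemma.** Let `B` be an expanding real `n×n` matrix and `D ⊆ ℝⁿ` finite with `0 ∈ D`.
If for some `k ≥ 1` two distinct `k`-tuples of digits have the same expansion
`Σ_{j<k} B^j d_j`, then `D⁺(μ) = ∞`. -/
theorem upperBeurling_top_of_not_injective {n : ℕ} (B : Matrix (Fin n) (Fin n) ℝ)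
    (hB : ∀ μ ∈ spectrum ℂ (B.map (algebraMap ℝ ℂ)), 1 < ‖μ‖)
    (D : Finset (EuclideanSpace ℝ (Fin n))) (hD0 : (0 : EuclideanSpace ℝ (Fin n)) ∈ D)
    (hcoll : ∃ k : ℕ, 1 ≤ k ∧ ∃ f g : Fin k → D, f ≠ g ∧
      ∑ j : Fin k, Matrix.toEuclideanLin (B ^ (j : ℕ)) (f j) =
        ∑ j : Fin k, Matrix.toEuclideanLin (B ^ (j : ℕ)) (g j)) :
    beurlingUpper (selfAffineMeasure B D) = ⊤ := by
  classical
  obtain ⟨k, hk, f, g, hfg, hsum⟩ := hcoll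
  -- the point of level `m*k` carrying multiplicity at least `2^m`
  set y : ℕ → EuclideanSpace ℝ (Fin n) := fun m =>
    ∑ a : Fin m, Matrix.toEuclideanLin (B ^ (k * (a : ℕ)))
      (∑ j : Fin k, Matrix.toEuclideanLin (B ^ (j : ℕ)) (f j)) with hy
  have key : ∀ m : ℕ, (2 : ℝ≥0∞) ^ m ≤ selfAffineMeasure B D {y m} := by
    intro m
    -- the family of digit tuples obtained by concatenating copies of `f` or `g`
    set H : (Fin m → Bool) → (Fin (m * k) → D) := fun c j =>
      if c (finProdFinEquiv.symm j).1 then f (finProdFinEquiv.symm j).2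
      else g (finProdFinEquiv.symm j).2 with hH
    have Hinj : Function.Injective H := by
      obtain ⟨b0, hb0⟩ : ∃ b, f b ≠ g b := by
        by_contra h; push_neg at h; exact hfg (funext h)
      intro c c' hcc
      funext a
      have h := congrFun hcc (finProdFinEquiv (a, b0))
      simp only [hH, Equiv.symm_apply_apply] at h
      by_cases h1 : c a <;> by_cases h2 : c' a <;> simp [h1, h2] at h ⊢
      · exact hb0 h
      · exact hb0 h.symm
    have Hsum : ∀ c : Fin m → Bool,
        (∑ j : Fin (m * k), Matrix.toEuclideanLin (B ^ (j : ℕ)) ((H c j : EuclideanSpace ℝ (Fin n))))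
          = y m := by
      intro c
      rw [← Equiv.sum_comp finProdFinEquiv
        (fun j => Matrix.toEuclideanLin (B ^ (j : ℕ)) ((H c j : EuclideanSpace ℝ (Fin n)))),
        Fintype.sum_prod_type]
      refine Finset.sum_congr rfl fun a _ => ?_
      have step : ∀ b : Fin k,
          Matrix.toEuclideanLin (B ^ ((finProdFinEquiv (a, b) : Fin (m * k)) : ℕ))
            ((H c (finProdFinEquiv (a, b)) : EuclideanSpace ℝ (Fin n)))
          = Matrix.toEuclideanLin (B ^ (k * (a : ℕ)))
              (Matrix.toEuclideanLin (B ^ (b : ℕ))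
                (((if c a then f b else g b) : D) : EuclideanSpace ℝ (Fin n))) := by
        intro b
        have h1 : ((finProdFinEquiv (a, b) : Fin (m * k)) : ℕ) = (b : ℕ) + k * (a : ℕ) := rfl
        have h2 : H c (finProdFinEquiv (a, b)) = if c a then f b else g b := by
          simp only [hH, Equiv.symm_apply_apply]
        rw [h1, h2, add_comm, pow_add, toEuclideanLin_mul_apply]
      rw [Finset.sum_congr rfl fun b _ => step b, ← map_sum]
      congr 1
      by_cases hca : c a
      · simp [hca]
      · simpa [hca] using hsum.symm
    -- the measure of the singleton at level `m*k`
    have hlevel : (2 : ℝ≥0∞) ^ m ≤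
        (Measure.sum (fun h : Fin (m * k) → D =>
          Measure.dirac (∑ j : Fin (m * k), Matrix.toEuclideanLin (B ^ (j : ℕ)) (h j)))) {y m} := by
      rw [Measure.sum_apply _ (measurableSet_singleton (y m))]
      have hone : ∀ c : Fin m → Bool,
          (Measure.dirac (∑ j : Fin (m * k),
            Matrix.toEuclideanLin (B ^ (j : ℕ)) ((H c j : EuclideanSpace ℝ (Fin n)))))
            ({y m} : Set (EuclideanSpace ℝ (Fin n))) = 1 := by
        intro c
        rw [Hsum c]
        exact Measure.dirac_apply_of_mem rfl
      calc (2 : ℝ≥0∞) ^ m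
          = ∑' _ : Fin m → Bool, (1 : ℝ≥0∞) := by
            rw [tsum_fintype]
            simp [Finset.sum_const, Finset.card_univ]
        _ = ∑' c : Fin m → Bool,
            (Measure.dirac (∑ j : Fin (m * k),
              Matrix.toEuclideanLin (B ^ (j : ℕ)) ((H c j : EuclideanSpace ℝ (Fin n)))))
              ({y m} : Set (EuclideanSpace ℝ (Fin n))) := by
            exact tsum_congr fun c => (hone c).symm
        _ ≤ ∑' h : Fin (m * k) → D,
            (Measure.dirac (∑ j : Fin (m * k),
              Matrix.toEuclideanLin (B ^ (j : ℕ)) ((h j : EuclideanSpace ℝ (Fin n)))))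
              ({y m} : Set (EuclideanSpace ℝ (Fin n))) :=
            ENNReal.tsum_comp_le_tsum_of_injective Hinj _
    refine hlevel.trans ?_
    have hle : (Measure.sum (fun h : Fin (m * k) → D =>
        Measure.dirac (∑ j : Fin (m * k), Matrix.toEuclideanLin (B ^ (j : ℕ)) (h j))))
        ≤ selfAffineMeasure B D :=
      le_iSup (fun N : ℕ => Measure.sum (fun h : Fin N → D =>
        Measure.dirac (∑ j : Fin N, Matrix.toEuclideanLin (B ^ (j : ℕ)) (h j)))) (m * k)
    exact Measure.le_iff'.mp hle _
  -- now compute the Beurling density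
  rw [beurlingUpper]
  have hev : ∀ᶠ N : ℝ in atTop,
      (⨆ z : EuclideanSpace ℝ (Fin n),
        selfAffineMeasure B D {w | ∀ i, |w i - z i| ≤ N / 2} / ENNReal.ofReal (N ^ n))
        = (⊤ : ℝ≥0∞) := by
    filter_upwards [eventually_ge_atTop (0 : ℝ)] with N hN
    set S : ℝ≥0∞ := ⨆ z : EuclideanSpace ℝ (Fin n),
      selfAffineMeasure B D {w | ∀ i, |w i - z i| ≤ N / 2} / ENNReal.ofReal (N ^ n) with hS
    have hpow : ∀ m : ℕ, (2 : ℝ≥0∞) ^ m / ENNReal.ofReal (N ^ n) ≤ S := by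
      intro m
      have hmem : ({y m} : Set (EuclideanSpace ℝ (Fin n)))
          ⊆ {w | ∀ i, |w i - y m i| ≤ N / 2} := by
        intro w hw i
        rw [Set.mem_singleton_iff] at hw
        subst hw
        simp [abs_of_nonneg, le_div_iff₀]
        linarith
      have h1 : (2 : ℝ≥0∞) ^ m ≤ selfAffineMeasure B D {w | ∀ i, |w i - y m i| ≤ N / 2} :=
        (key m).trans (measure_mono hmem)
      refine le_trans (ENNReal.div_le_div_right h1 _) ?_
      rw [hS]
      exact le_iSup (fun z : EuclideanSpace ℝ (Fin n) =>
        selfAffineMeasure B D {w | ∀ i, |w i - z i| ≤ N / 2} / ENNReal.ofReal (N ^ n)) (y m)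
    have hnat : ∀ m : ℕ, (m : ℝ≥0∞) / ENNReal.ofReal (N ^ n) ≤ S := by
      intro m
      refine le_trans (ENNReal.div_le_div_right ?_ _) (hpow m)
      have : (m : ℝ≥0∞) ≤ ((2 ^ m : ℕ) : ℝ≥0∞) :=
        Nat.cast_le.mpr Nat.lt_two_pow_self.le
      simpa [Nat.cast_pow] using this
    rw [eq_top_iff]
    calc (⊤ : ℝ≥0∞) = (⨆ m : ℕ, (m : ℝ≥0∞)) / ENNReal.ofReal (N ^ n) := by
          rw [ENNReal.iSup_natCast, ENNReal.top_div_of_ne_top ENNReal.ofReal_ne_top]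
      _ = ⨆ m : ℕ, (m : ℝ≥0∞) / ENNReal.ofReal (N ^ n) := ENNReal.iSup_div _ _
      _ ≤ S := iSup_le hnat
  rw [limsup_congr hev]
  exact limsup_const ⊤
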